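/- The restriction of Q = P_m P_{m-1} ⋯ P_1 to N(A)^⊥ has operator norm strictly less than 1; equivalently, every singular value σ of Q corresponding to directions in N(A)^⊥ not fixed by Q satisfies σ < 1, so ||Q x||_2 ≤ σ_max ||x||_2 < ||x||_2 for all nonzero x ∈ N(A)^⊥, where σ_max = max over singular values of Q that are strictly between 0 and 1. -/

import Mathlib

open Matrix Filter

noncomputable def projMat {n : ℕ} (a : Fin n → ℝ) : Matrix (Fin n) (Fin n) ℝ :=
  1 - (a ⬝ᵥ a)⁻¹ • Matrix.vecMulVec a a

noncomputable def vnorm {n : ℕ} (x : Fin n → ℝ) : ℝ := Real.sqrt (x ⬝ᵥ x)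

/-- `x ∈ N(A)^⊥`: `x` is orthogonal to every vector of the null space of `A`. -/
def inNullPerp {m n : ℕ} (A : Matrix (Fin m) (Fin n) ℝ) (x : Fin n → ℝ) : Prop :=
  ∀ z : Fin n → ℝ, A.mulVec z = 0 → x ⬝ᵥ z = 0

/-- `P_k` (0-indexed): the projection onto the hyperplane orthogonal to row `k` of `A`. -/
noncomputable def Pnat {m n : ℕ} (A : Matrix (Fin m) (Fin n) ℝ) (k : ℕ) :
    Matrix (Fin n) (Fin n) ℝ :=
  if h : k < m then projMat (A ⟨k, h⟩) else 1

/-- descending product `f (lo+len-1) * ⋯ * f (lo+1) * f lo` -/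
noncomputable def prodDesc {α : Type*} [Monoid α] (f : ℕ → α) (lo : ℕ) : ℕ → α
  | 0 => 1
  | k + 1 => f (lo + k) * prodDesc f lo k

/-- ascending product `f lo * f (lo+1) * ⋯ * f (lo+len-1)` -/
noncomputable def prodAsc {α : Type*} [Monoid α] (f : ℕ → α) (lo : ℕ) : ℕ → α
  | 0 => 1
  | k + 1 => prodAsc f lo k * f (lo + k)

/-- `Q_j = P_m ⋯ P_{j+1}` (paper indices); here `j : Fin m` is 0-indexed. -/
noncomputable def Qmat {m n : ℕ} (A : Matrix (Fin m) (Fin n) ℝ) (j : Fin m) :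
    Matrix (Fin n) (Fin n) ℝ :=
  prodDesc (Pnat A) ((j : ℕ) + 1) (m - 1 - (j : ℕ))

/-- `Q = P_m P_{m-1} ⋯ P_1`. -/
noncomputable def Qfull {m n : ℕ} (A : Matrix (Fin m) (Fin n) ℝ) : Matrix (Fin n) (Fin n) ℝ :=
  prodDesc (Pnat A) 0 m

/-- `A_S = (Q_1 a_1, …, Q_m a_m)ᵀ`. -/
noncomputable def ASmat {m n : ℕ} (A : Matrix (Fin m) (Fin n) ℝ) : Matrix (Fin m) (Fin n) ℝ :=
  fun i => (Qmat A i).mulVec (A i)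

/-- `M = diag (1/‖a_1‖², …, 1/‖a_m‖²)`. -/
noncomputable def Mdiag {m n : ℕ} (A : Matrix (Fin m) (Fin n) ℝ) : Matrix (Fin m) (Fin m) ℝ :=
  Matrix.diagonal fun i => (A i ⬝ᵥ A i)⁻¹

/-- `Q̄_1 = Q̄_m = 0`, `Q̄_2 = I`, `Q̄_i = P_2 ⋯ P_{i-1}` (paper indices); `i : Fin m` 0-indexed. -/
noncomputable def barQmat {m n : ℕ} (A : Matrix (Fin m) (Fin n) ℝ) (i : Fin m) :
    Matrix (Fin n) (Fin n) ℝ :=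
  if (i : ℕ) = 0 ∨ (i : ℕ) = m - 1 then 0 else prodAsc (Pnat A) 1 ((i : ℕ) - 1)

/-- `Q̄ = P_2 P_3 ⋯ P_{m-1}`. -/
noncomputable def barQfull {m n : ℕ} (A : Matrix (Fin m) (Fin n) ℝ) : Matrix (Fin n) (Fin n) ℝ :=
  prodAsc (Pnat A) 1 (m - 2)

/-- `Ā_S = (Q̄_1 a_1, …, Q̄_m a_m)ᵀ`. -/
noncomputable def barASmat {m n : ℕ} (A : Matrix (Fin m) (Fin n) ℝ) : Matrix (Fin m) (Fin n) ℝ :=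
  fun i => (barQmat A i).mulVec (A i)

/-- `h_{p,q} = a_pᵀ a_q / ‖a_q‖²`. -/
noncomputable def hcoef {m n : ℕ} (A : Matrix (Fin m) (Fin n) ℝ) (p q : Fin m) : ℝ :=
  (A p ⬝ᵥ A q) / (A q ⬝ᵥ A q)

lemma dot_self_nonneg' {n : ℕ} (x : Fin n → ℝ) : 0 ≤ x ⬝ᵥ x :=
  Finset.sum_nonneg fun i _ => mul_self_nonneg (x i)

lemma dot_self_eq_zero' {n : ℕ} {x : Fin n → ℝ} (h : x ⬝ᵥ x = 0) : x = 0 := by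
  funext i
  have := (Finset.sum_eq_zero_iff_of_nonneg (fun i _ => mul_self_nonneg (x i))).mp h i (Finset.mem_univ i)
  have := mul_self_eq_zero.mp this
  simpa using this

lemma vnorm_nonneg' {n : ℕ} (x : Fin n → ℝ) : 0 ≤ vnorm x := Real.sqrt_nonneg _

lemma vnorm_pos' {n : ℕ} {x : Fin n → ℝ} (hx : x ≠ 0) : 0 < vnorm x := by
  rcases lt_or_eq_of_le (dot_self_nonneg' x) with h | h
  · exact Real.sqrt_pos.mpr h
  · exact absurd (dot_self_eq_zero' h.symm) hx

lemma vnorm_le_vnorm {n : ℕ} {x y : Fin n → ℝ} (h : x ⬝ᵥ x ≤ y ⬝ᵥ y) : vnorm x ≤ vnorm y :=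
  Real.sqrt_le_sqrt h

lemma vnorm_smul' {n : ℕ} (c : ℝ) (x : Fin n → ℝ) : vnorm (c • x) = |c| * vnorm x := by
  unfold vnorm
  rw [smul_dotProduct, dotProduct_smul, smul_eq_mul, smul_eq_mul, ← mul_assoc,
    Real.sqrt_mul (mul_self_nonneg c), ← sq, Real.sqrt_sq_eq_abs]

lemma projMat_mulVec {n : ℕ} (a x : Fin n → ℝ) :
    (projMat a).mulVec x = x - ((a ⬝ᵥ a)⁻¹ * (a ⬝ᵥ x)) • a := by
  unfold projMat
  rw [sub_mulVec, one_mulVec, smul_mulVec]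
  congr 1
  rw [mul_smul]
  congr 1
  funext i
  simp only [Matrix.mulVec, Matrix.vecMulVec, dotProduct, Pi.smul_apply, smul_eq_mul,
    Matrix.of_apply, Finset.sum_mul, Finset.mul_sum]
  exact Finset.sum_congr rfl fun j _ => by ring

lemma proj_dot {n : ℕ} {a : Fin n → ℝ} (ha : a ≠ 0) (x : Fin n → ℝ) :
    ((projMat a).mulVec x) ⬝ᵥ ((projMat a).mulVec x) = x ⬝ᵥ x - (a ⬝ᵥ x)^2 / (a ⬝ᵥ a) := by
  have haa : a ⬝ᵥ a ≠ 0 := fun h => ha (dot_self_eq_zero' h)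
  rw [projMat_mulVec]
  rw [sub_dotProduct, dotProduct_sub, dotProduct_sub, smul_dotProduct, dotProduct_smul,
    dotProduct_smul, smul_dotProduct]
  have hcomm : x ⬝ᵥ a = a ⬝ᵥ x := dotProduct_comm x a
  field_simp
  ring_nf
  rw [hcomm]
  have hinv : (a ⬝ᵥ a) * (a ⬝ᵥ a)⁻¹ = 1 := mul_inv_cancel₀ haa
  linear_combination (a ⬝ᵥ x)^2 * ((a ⬝ᵥ a) * (a ⬝ᵥ a)⁻¹ - 1) * hinv

lemma proj_norm_le {n : ℕ} {a : Fin n → ℝ} (ha : a ≠ 0) (x : Fin n → ℝ) :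
    vnorm ((projMat a).mulVec x) ≤ vnorm x := by
  apply vnorm_le_vnorm
  rw [proj_dot ha]
  have haa : 0 < a ⬝ᵥ a := lt_of_le_of_ne (dot_self_nonneg' a) fun h => ha (dot_self_eq_zero' h.symm)
  have : 0 ≤ (a ⬝ᵥ x)^2 / (a ⬝ᵥ a) := div_nonneg (sq_nonneg _) haa.le
  linarith

lemma proj_norm_eq {n : ℕ} {a : Fin n → ℝ} (ha : a ≠ 0) {x : Fin n → ℝ}
    (h : vnorm ((projMat a).mulVec x) = vnorm x) : a ⬝ᵥ x = 0 := by
  have haa : 0 < a ⬝ᵥ a := lt_of_le_of_ne (dot_self_nonneg' a) fun h => ha (dot_self_eq_zero' h.symm)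
  have h2 : ((projMat a).mulVec x) ⬝ᵥ ((projMat a).mulVec x) = x ⬝ᵥ x := by
    have e1 := Real.sq_sqrt (dot_self_nonneg' ((projMat a).mulVec x))
    have e2 := Real.sq_sqrt (dot_self_nonneg' x)
    unfold vnorm at h
    rw [← e1, ← e2, h]
  rw [proj_dot ha] at h2
  have : (a ⬝ᵥ x)^2 / (a ⬝ᵥ a) = 0 := by linarith
  have := (div_eq_zero_iff.mp this).resolve_right haa.ne'
  exact pow_eq_zero_iff (by norm_num) |>.mp this

lemma proj_fix {n : ℕ} {a x : Fin n → ℝ} (h : a ⬝ᵥ x = 0) :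
    (projMat a).mulVec x = x := by
  rw [projMat_mulVec, h, mul_zero, zero_smul, sub_zero]

/-- Strict contraction on nonzero vectors of `N(A)^⊥`. -/
lemma key_lt {m n : ℕ} (A : Matrix (Fin m) (Fin n) ℝ) (hA : ∀ i, A i ≠ 0)
    {x : Fin n → ℝ} (hx : inNullPerp A x) (hx0 : x ≠ 0) :
    vnorm ((Qfull A).mulVec x) < vnorm x := by
  set y : ℕ → (Fin n → ℝ) := fun k => (prodDesc (Pnat A) 0 k).mulVec x with hy
  have hy0 : y 0 = x := by simp [hy, prodDesc]
  have hstep : ∀ k, y (k + 1) = (Pnat A k).mulVec (y k) := by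
    intro k
    simp only [hy, prodDesc, Nat.zero_add, ← Matrix.mulVec_mulVec]
  have hmono : ∀ k, vnorm (y (k + 1)) ≤ vnorm (y k) := by
    intro k
    rw [hstep]
    unfold Pnat
    by_cases h : k < m
    · rw [dif_pos h]; exact proj_norm_le (hA _) _
    · rw [dif_neg h, Matrix.one_mulVec]
  have hchain : ∀ k d, vnorm (y (k + d)) ≤ vnorm (y k) := by
    intro k d
    induction d with
    | zero => simp
    | succ d ih => calc vnorm (y (k + (d+1))) ≤ vnorm (y (k + d)) := hmono _
                    _ ≤ vnorm (y k) := ih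
  have hQ : (Qfull A).mulVec x = y m := rfl
  rw [hQ]
  rcases lt_or_eq_of_le (by simpa [hy0] using hchain 0 m : vnorm (y m) ≤ vnorm x) with h | h
  · exact h
  exfalso
  -- all norms equal; deduce each step fixes and is orthogonal
  have hallge : ∀ k, k ≤ m → vnorm (y k) = vnorm x := by
    intro k hk
    have h1 : vnorm (y k) ≤ vnorm x := by simpa [hy0] using hchain 0 k
    have h2 : vnorm (y m) ≤ vnorm (y k) := by
      have := hchain k (m - k); rwa [Nat.add_sub_cancel' hk] at this
    linarith [h.ge, h.le]
  have hfix : ∀ k, k ≤ m → y k = x := by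
    intro k hk
    induction k with
    | zero => exact hy0
    | succ k ih =>
      have hk' : k < m := hk
      have ihx := ih hk'.le
      have heq : vnorm (y (k+1)) = vnorm (y k) := by
        rw [hallge _ hk, hallge _ hk'.le]
      rw [hstep, ihx] at heq ⊢
      unfold Pnat at heq ⊢
      rw [dif_pos hk'] at heq ⊢
      rw [proj_fix (proj_norm_eq (hA _) heq)]
  have hdot : ∀ k (hk : k < m), A ⟨k, hk⟩ ⬝ᵥ x = 0 := by
    intro k hk
    have heq : vnorm (y (k+1)) = vnorm (y k) := by
      rw [hallge _ hk, hallge _ (le_of_lt hk)]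
    rw [hstep, hfix k hk.le] at heq
    unfold Pnat at heq
    rw [dif_pos hk] at heq
    exact proj_norm_eq (hA _) heq
  have hAx : A.mulVec x = 0 := by
    funext i
    have := hdot i i.2
    simpa [Matrix.mulVec, dotProduct] using this
  exact hx0 (dot_self_eq_zero' (hx x hAx))

/-- the restriction of `Q = P_m ⋯ P_1` to `N(A)^⊥` has norm `< 1`: there is
`σ` with `0 ≤ σ < 1` and `‖Q x‖ ≤ σ ‖x‖` on `N(A)^⊥`; in particular `‖Q x‖ < ‖x‖` for
every nonzero `x ∈ N(A)^⊥`. -/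
theorem stmt16 {m n : ℕ} (A : Matrix (Fin m) (Fin n) ℝ) (hA : ∀ i, A i ≠ 0) :
    ∃ σ : ℝ, 0 ≤ σ ∧ σ < 1 ∧
      (∀ x : Fin n → ℝ, inNullPerp A x → vnorm ((Qfull A).mulVec x) ≤ σ * vnorm x) ∧
      (∀ x : Fin n → ℝ, inNullPerp A x → x ≠ 0 →
        vnorm ((Qfull A).mulVec x) < vnorm x) := by
  classical
  have contQ : Continuous fun x : Fin n → ℝ => vnorm ((Qfull A).mulVec x) := by
    have h1 : Continuous fun x : Fin n → ℝ => (Qfull A).mulVec x :=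
      (Matrix.mulVecLin (Qfull A)).continuous_of_finiteDimensional
    have h2 : Continuous fun y : Fin n → ℝ => y ⬝ᵥ y := by
      unfold dotProduct
      exact continuous_finset_sum _ fun i _ => (continuous_apply i).mul (continuous_apply i)
    exact Real.continuous_sqrt.comp (h2.comp h1)
  have contN : Continuous fun x : Fin n → ℝ => vnorm x := by
    have h2 : Continuous fun y : Fin n → ℝ => y ⬝ᵥ y := by
      unfold dotProduct
      exact continuous_finset_sum _ fun i _ => (continuous_apply i).mul (continuous_apply i)
    exact Real.continuous_sqrt.comp h2
  set S := {x : Fin n → ℝ | inNullPerp A x ∧ vnorm x = 1} with hS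
  have hmem : ∀ x : Fin n → ℝ, inNullPerp A x → x ≠ 0 → (vnorm x)⁻¹ • x ∈ S := by
    intro x hx hx0
    have hpos := vnorm_pos' hx0
    constructor
    · intro z hz
      rw [smul_dotProduct, hx z hz, smul_eq_mul, mul_zero]
    · rw [vnorm_smul', abs_inv, abs_of_pos hpos, inv_mul_cancel₀ hpos.ne']
  have hSne_case : S.Nonempty ∨ S = ∅ := by
    rcases Set.eq_empty_or_nonempty S with h | h
    · exact Or.inr h
    · exact Or.inl h
  rcases hSne_case with hSne | hSempty
  · -- compactness argument
    have hclosed : IsClosed S := by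
      have h1 : IsClosed {x : Fin n → ℝ | inNullPerp A x} := by
        have : {x : Fin n → ℝ | inNullPerp A x} =
            ⋂ z : Fin n → ℝ, {x | A.mulVec z = 0 → x ⬝ᵥ z = 0} := by
          ext x; simp [inNullPerp, Set.mem_iInter]
        rw [this]
        refine isClosed_iInter fun z => ?_
        by_cases hz : A.mulVec z = 0
        · have : {x : Fin n → ℝ | A.mulVec z = 0 → x ⬝ᵥ z = 0} =
              {x : Fin n → ℝ | x ⬝ᵥ z = 0} := by
            ext x; simp [hz]
          rw [this]
          have hc : Continuous fun x : Fin n → ℝ => x ⬝ᵥ z := by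
            unfold dotProduct
            exact continuous_finset_sum _ fun i _ => (continuous_apply i).mul continuous_const
          exact isClosed_eq hc continuous_const
        · have : {x : Fin n → ℝ | A.mulVec z = 0 → x ⬝ᵥ z = 0} = Set.univ := by
            ext x; simp [hz]
          rw [this]; exact isClosed_univ
      have h2 : IsClosed {x : Fin n → ℝ | vnorm x = 1} :=
        isClosed_eq contN continuous_const
      exact h1.inter h2
    have hbdd : Bornology.IsBounded S := by
      apply (Metric.isBounded_closedBall (x := (0 : Fin n → ℝ)) (r := 1)).subset
      intro x hx
      rcases hx with ⟨-, hx1⟩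
      have hdot : x ⬝ᵥ x = 1 := by
        have := Real.sq_sqrt (dot_self_nonneg' x)
        unfold vnorm at hx1
        rw [hx1] at this
        simpa using this.symm
      rw [Metric.mem_closedBall, dist_zero_right]
      rw [pi_norm_le_iff_of_nonneg zero_le_one]
      intro i
      have hi : x i * x i ≤ 1 := by
        have := Finset.single_le_sum (f := fun j => x j * x j)
          (fun j _ => mul_self_nonneg (x j)) (Finset.mem_univ i)
        rw [show ∑ j, x j * x j = x ⬝ᵥ x from rfl, hdot] at this
        exact this
      have h3 : |x i| * |x i| ≤ 1 := by rwa [abs_mul_abs_self]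
      rw [Real.norm_eq_abs]
      nlinarith [abs_nonneg (x i)]
    have hcompact : IsCompact S := Metric.isCompact_of_isClosed_isBounded hclosed hbdd
    obtain ⟨x₀, hx₀S, hmax'⟩ := hcompact.exists_isMaxOn hSne contQ.continuousOn
    have hmax : ∀ y ∈ S, vnorm ((Qfull A).mulVec y) ≤ vnorm ((Qfull A).mulVec x₀) :=
      fun y hy => hmax' hy
    obtain ⟨hx₀perp, hx₀norm⟩ := hx₀S
    have hx₀ne : x₀ ≠ 0 := by
      intro h
      rw [h] at hx₀norm
      unfold vnorm at hx₀norm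
      simp at hx₀norm
    refine ⟨vnorm ((Qfull A).mulVec x₀), vnorm_nonneg' _, ?_, ?_, ?_⟩
    · have := key_lt A hA hx₀perp hx₀ne
      rwa [hx₀norm] at this
    · intro x hx
      by_cases hx0 : x = 0
      · subst hx0
        rw [Matrix.mulVec_zero]
        have h0 : vnorm (0 : Fin n → ℝ) = 0 := by unfold vnorm; simp
        rw [h0, mul_zero]
      · have hpos := vnorm_pos' hx0
        have hu := hmem x hx hx0
        have := hmax _ hu
        rw [Matrix.mulVec_smul, vnorm_smul', abs_inv, abs_of_pos hpos] at this
        calc vnorm ((Qfull A).mulVec x)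
            = vnorm x * ((vnorm x)⁻¹ * vnorm ((Qfull A).mulVec x)) := by
              field_simp
          _ ≤ vnorm x * vnorm ((Qfull A).mulVec x₀) := by
              apply mul_le_mul_of_nonneg_left this hpos.le
          _ = vnorm ((Qfull A).mulVec x₀) * vnorm x := mul_comm _ _
    · intro x hx hx0
      exact key_lt A hA hx hx0
  · -- S empty: the subspace is trivial
    refine ⟨0, le_refl 0, one_pos, ?_, ?_⟩
    · intro x hx
      by_cases hx0 : x = 0
      · subst hx0
        rw [Matrix.mulVec_zero, zero_mul]
        unfold vnorm; simp
      · exact absurd (hmem x hx hx0) (by rw [hSempty]; exact Set.notMem_empty _)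
    · intro x hx hx0
      exact key_lt A hA hx hx0
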